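/- There exists an invertible x ∈ M_n(ℂ) and λ ∈ ℂ such that the two elements x ⊕ λx and λxᵀ ⊕ xᵀ generate M_n(ℂ) ⊕ M_n(ℂ) as a unital ℂ-algebra. -/

import Mathlib

set_option linter.unusedSectionVars false

open Matrix

namespace Stmt16Aux

open Fin.NatCast Fin.CommRing

variable (n : ℕ) [NeZero n]

noncomputable def a (j : Fin n) : ℂ := (((j : ℕ) + 2 : ℕ) : ℂ)

lemma a_ne_zero (j : Fin n) : a n j ≠ 0 := by
  unfold a
  exact_mod_cast (by omega : ((j:ℕ) + 2 : ℕ) ≠ 0)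

lemma a_sq_inj {n : ℕ} [NeZero n] {j k : Fin n} (h : a n j ^ 2 = a n k ^ 2) : j = k := by
  have h2 : (a n j - a n k) * (a n j + a n k) = 0 := by linear_combination h
  rcases mul_eq_zero.mp h2 with h3 | h3
  · have h4 : a n j = a n k := sub_eq_zero.mp h3
    unfold a at h4
    have : (j : ℕ) + 2 = (k : ℕ) + 2 := by exact_mod_cast h4
    exact Fin.ext (by omega)
  · exfalso
    have h4 : a n j + a n k = (((j:ℕ) + 2 + ((k:ℕ) + 2) : ℕ) : ℂ) := by unfold a; push_cast; ring
    rw [h4] at h3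
    exact (by exact_mod_cast (by omega : ((j:ℕ) + 2 + ((k:ℕ) + 2) : ℕ) ≠ 0) :
      (((j:ℕ) + 2 + ((k:ℕ) + 2) : ℕ) : ℂ) ≠ 0) h3

noncomputable def x : Matrix (Fin n) (Fin n) ℂ :=
  Matrix.of fun i j => if i = j + 1 then a n j else 0

noncomputable def y : Matrix (Fin n) (Fin n) ℂ :=
  Matrix.of fun i j => if j = i + 1 then (a n i)⁻¹ else 0

lemma y_mul_x : y n * x n = 1 := by
  ext i l
  simp only [Matrix.mul_apply, x, y, Matrix.of_apply, ite_mul, zero_mul, mul_ite, mul_zero]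
  rw [Finset.sum_eq_single (i + 1)]
  · simp only [if_pos rfl]
    by_cases h : i = l
    · subst h; simp [inv_mul_cancel₀ (a_ne_zero n i), Matrix.one_apply]
    · rw [if_neg (by simpa using h), Matrix.one_apply_ne h]
  · intro b _ hb
    simp [hb]
  · intro h; exact absurd (Finset.mem_univ _) h

lemma isUnit_x : IsUnit (x n) := by
  have h := y_mul_x n
  exact ⟨⟨x n, y n, mul_eq_one_comm.mpr h, h⟩, rfl⟩

lemma transpose_x_mul_x : (x n)ᵀ * x n = Matrix.diagonal (fun j => a n j ^ 2) := by
  ext j l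
  simp only [Matrix.mul_apply, Matrix.transpose_apply, x, Matrix.of_apply, ite_mul, zero_mul,
    mul_ite, mul_zero]
  rw [Finset.sum_eq_single (j + 1)]
  · by_cases h : j = l
    · subst h; simp [Matrix.diagonal_apply_eq, sq]
    · rw [if_pos rfl, if_neg (by simpa using fun hh => h hh), Matrix.diagonal_apply_ne _ h]
  · intro b _ hb; simp [fun hh => hb hh]
  · intro h; exact absurd (Finset.mem_univ _) h

lemma x_mul_std (k j : Fin n) :
    x n * Matrix.single k j (1:ℂ) = a n k • Matrix.single (k + 1) j 1 := by
  ext p q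
  simp only [Matrix.mul_apply, x, Matrix.of_apply, Matrix.smul_apply, Matrix.single,
    Matrix.of_apply, smul_eq_mul, mul_ite, mul_one, mul_zero, ite_mul, zero_mul]
  rw [Finset.sum_eq_single k]
  · by_cases h1 : p = k + 1 <;> by_cases h2 : q = j <;> simp [h1, h2, eq_comm]
  · intro b _ hb; simp [Ne.symm hb]
  · intro h; exact absurd (Finset.mem_univ _) h

lemma x_pow (m : ℕ) : x n ^ m = Matrix.of fun i j =>
    if i = j + (m : Fin n) then (∏ t ∈ Finset.range m, a n (j + (t : Fin n))) else 0 := by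
  induction m with
  | zero => ext i j; simp [Matrix.one_apply]
  | succ m ih =>
    rw [pow_succ, ih]
    ext i j
    simp only [Matrix.mul_apply, x, Matrix.of_apply, ite_mul, zero_mul, mul_ite, mul_zero]
    rw [Finset.sum_eq_single (j + 1)]
    · have hidx : (j + 1) + (m : Fin n) = j + ((m + 1 : ℕ) : Fin n) := by push_cast; ring
      have hprod : (∏ t ∈ Finset.range m, a n ((j + 1) + (t : Fin n))) * a n j
          = ∏ t ∈ Finset.range (m + 1), a n (j + (t : Fin n)) := by
        rw [Finset.prod_range_succ']
        congr 1
        · exact Finset.prod_congr rfl fun t _ => by congr 1; push_cast; ring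
        · congr 1; push_cast; ring
      rw [hidx]
      by_cases h : i = j + ((m + 1 : ℕ) : Fin n)
      · rw [if_pos h, if_pos h, if_pos rfl, hprod]
      · rw [if_neg h, if_neg h]; simp
    · intro b _ hb; simp [fun hh => hb hh]
    · intro h; exact absurd (Finset.mem_univ _) h

lemma x_pow_n : x n ^ n = (∏ s : Fin n, a n s) • (1 : Matrix (Fin n) (Fin n) ℂ) := by
  rw [x_pow]
  ext i j
  have hprod : (∏ t ∈ Finset.range n, a n (j + (t : Fin n))) = ∏ s : Fin n, a n s := by
    rw [← Fin.prod_univ_eq_prod_range (fun t => a n (j + (t : Fin n))) n]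
    simp only [Fin.cast_val_eq_self]
    exact Fintype.prod_equiv (Equiv.addLeft j) _ _ fun i => rfl
  simp only [Matrix.of_apply, Fin.natCast_self, add_zero, Matrix.smul_apply, Matrix.one_apply,
    smul_eq_mul, hprod]
  by_cases h : i = j
  · simp [h]
  · simp [h, Ne.symm h]

lemma diag_prod_mem (T : Subalgebra ℂ (Matrix (Fin n) (Fin n) ℂ)) {ι : Type*} [DecidableEq ι]
    (s : Finset ι) (f : ι → Fin n → ℂ) (hf : ∀ k ∈ s, Matrix.diagonal (f k) ∈ T) :
    Matrix.diagonal (fun i => ∏ k ∈ s, f k i) ∈ T := by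
  induction s using Finset.induction with
  | empty => simpa using T.one_mem
  | @insert b s h ih =>
    simp only [Finset.prod_insert h]
    rw [show Matrix.diagonal (fun i => f b i * ∏ k ∈ s, f k i)
        = Matrix.diagonal (f b) * Matrix.diagonal (fun i => ∏ k ∈ s, f k i) from
      (Matrix.diagonal_mul_diagonal _ _).symm]
    exact mul_mem (hf b (Finset.mem_insert_self _ _))
      (ih fun k hk => hf k (Finset.mem_insert_of_mem hk))

lemma std_diag_mem (T : Subalgebra ℂ (Matrix (Fin n) (Fin n) ℂ))
    (hd : Matrix.diagonal (fun j => a n j ^ 2) ∈ T) (j : Fin n) :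
    Matrix.single j j (1:ℂ) ∈ T := by
  have key : Matrix.single j j (1:ℂ) = Matrix.diagonal (fun i => ∏ k ∈ Finset.univ.erase j,
      (a n j ^ 2 - a n k ^ 2)⁻¹ * (a n i ^ 2 - a n k ^ 2)) := by
    ext p q
    by_cases hpq : p = q
    · subst hpq
      rw [Matrix.diagonal_apply_eq]
      by_cases hpj : p = j
      · subst hpj
        rw [Matrix.single_apply_same]
        refine (Finset.prod_eq_one fun k hk => ?_).symm
        have hk' : k ≠ p := fun hc => (Finset.mem_erase.mp hk).1 hc
        have hne : a n p ^ 2 - a n k ^ 2 ≠ 0 := by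
          refine sub_ne_zero.mpr fun hc => hk' ?_
          exact (a_sq_inj hc).symm
        exact inv_mul_cancel₀ hne
      · rw [Matrix.single_apply_of_ne _ _ _ _ _ (by tauto)]
        refine (Finset.prod_eq_zero (Finset.mem_erase.mpr ⟨hpj, Finset.mem_univ p⟩) ?_).symm
        simp
    · rw [Matrix.diagonal_apply_ne _ hpq,
        Matrix.single_apply_of_ne _ _ _ _ _ (by rintro ⟨rfl, h2⟩; exact hpq h2)]
  rw [key]
  refine diag_prod_mem n T _ _ fun k _ => ?_
  have hfact : Matrix.diagonal (fun i => (a n j ^ 2 - a n k ^ 2)⁻¹ * (a n i ^ 2 - a n k ^ 2))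
      = (a n j ^ 2 - a n k ^ 2)⁻¹ • (Matrix.diagonal (fun i => a n i ^ 2) - (a n k ^ 2) • 1) := by
    ext p q
    by_cases h : p = q
    · subst h
      simp [Matrix.sub_apply, Matrix.smul_apply, Matrix.diagonal_apply_eq, Matrix.one_apply_eq]
    · simp [Matrix.sub_apply, Matrix.smul_apply, Matrix.diagonal_apply_ne _ h,
        Matrix.one_apply_ne h]
  rw [hfact]
  exact T.smul_mem (T.sub_mem hd (T.smul_mem T.one_mem _)) _

lemma adjoin_x_xT : Algebra.adjoin ℂ ({x n, (x n)ᵀ} : Set (Matrix (Fin n) (Fin n) ℂ)) = ⊤ := by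
  set T := Algebra.adjoin ℂ ({x n, (x n)ᵀ} : Set (Matrix (Fin n) (Fin n) ℂ)) with hT
  have hx : x n ∈ T := Algebra.subset_adjoin (Set.mem_insert _ _)
  have hxT : (x n)ᵀ ∈ T := Algebra.subset_adjoin (Set.mem_insert_iff.mpr (Or.inr rfl))
  have hd : Matrix.diagonal (fun j => a n j ^ 2) ∈ T := transpose_x_mul_x n ▸ mul_mem hxT hx
  have hjj : ∀ j, Matrix.single j j (1:ℂ) ∈ T := std_diag_mem n T hd
  have hmj : ∀ (m : ℕ) (j : Fin n), Matrix.single (j + (m : Fin n)) j (1:ℂ) ∈ T := by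
    intro m
    induction m with
    | zero => intro j; simpa using hjj j
    | succ m ih =>
      intro j
      have key : Matrix.single (j + ((m + 1 : ℕ) : Fin n)) j (1:ℂ)
          = (a n (j + (m : Fin n)))⁻¹ • (x n * Matrix.single (j + (m : Fin n)) j 1) := by
        rw [x_mul_std, smul_smul, inv_mul_cancel₀ (a_ne_zero n _), one_smul]
        congr 1
        push_cast
        ring
      rw [key]
      exact T.smul_mem (mul_mem hx (ih j)) _
  have hstd : ∀ i j : Fin n, Matrix.single i j (1:ℂ) ∈ T := by
    intro i j
    have h := hmj ((i - j : Fin n) : ℕ) j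
    have e : j + ((((i - j : Fin n) : ℕ)) : Fin n) = i := by
      rw [Fin.cast_val_eq_self]
      abel
    rwa [e] at h
  rw [eq_top_iff]
  intro M _
  rw [matrix_eq_sum_single M]
  refine sum_mem fun i _ => sum_mem fun j _ => ?_
  have h : Matrix.single i j (M i j) = M i j • Matrix.single i j (1:ℂ) := by
    rw [smul_single, smul_eq_mul, mul_one]
  rw [h]
  exact T.smul_mem (hstd i j) _

end Stmt16Aux

open Stmt16Aux in
theorem stmt16 (n : ℕ) (hn : 1 ≤ n) :
    ∃ (x : Matrix (Fin n) (Fin n) ℂ) (lam : ℂ), IsUnit x ∧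
      Algebra.adjoin ℂ
        ({((x, lam • x) : Matrix (Fin n) (Fin n) ℂ × Matrix (Fin n) (Fin n) ℂ),
          (lam • xᵀ, xᵀ)} :
          Set (Matrix (Fin n) (Fin n) ℂ × Matrix (Fin n) (Fin n) ℂ)) = ⊤ := by
  haveI : NeZero n := ⟨by omega⟩
  refine ⟨x n, 2, isUnit_x n, ?_⟩
  set M := Matrix (Fin n) (Fin n) ℂ with hM
  set u : M × M := (x n, (2:ℂ) • x n) with hu_def
  set v : M × M := ((2:ℂ) • (x n)ᵀ, (x n)ᵀ) with hv_def
  set A := Algebra.adjoin ℂ ({u, v} : Set (M × M)) with hA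
  have hu : u ∈ A := Algebra.subset_adjoin (Set.mem_insert _ _)
  have hv : v ∈ A := Algebra.subset_adjoin (Set.mem_insert_iff.mpr (Or.inr rfl))
  set C : ℂ := ∏ s : Fin n, a n s with hC
  have hCne : C ≠ 0 := Finset.prod_ne_zero_iff.mpr fun s _ => a_ne_zero n s
  have hupow : u ^ n = (C • (1 : M), ((2:ℂ)^n * C) • (1 : M)) := by
    rw [hu_def, Prod.pow_mk, smul_pow, x_pow_n, smul_smul]
  have hw : (((1 : M), ((2:ℂ)^n) • (1 : M)) : M × M) ∈ A := by
    have hmem := A.smul_mem (pow_mem hu n) C⁻¹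
    rw [hupow] at hmem
    have heq : C⁻¹ • ((C • (1:M), ((2:ℂ)^n * C) • (1:M)) : M × M)
        = ((1:M), ((2:ℂ)^n) • (1:M)) := by
      rw [Prod.smul_mk, smul_smul, smul_smul, inv_mul_cancel₀ hCne, one_smul,
        mul_comm ((2:ℂ)^n) C, ← mul_assoc, inv_mul_cancel₀ hCne, one_mul]
    rwa [heq] at hmem
  have h2n : (2:ℂ)^n - 1 ≠ 0 := by
    have hne : ((2^n : ℕ) : ℂ) ≠ ((1:ℕ) : ℂ) := by
      exact_mod_cast Nat.ne_of_gt (Nat.one_lt_two_pow_iff.mpr (by omega))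
    intro hc
    apply hne
    push_cast
    linear_combination hc
  have h10 : (((1:M), (0:M)) : M × M) ∈ A := by
    have hmem := A.smul_mem (A.sub_mem (A.smul_mem A.one_mem ((2:ℂ)^n)) hw) ((2:ℂ)^n - 1)⁻¹
    have heq : ((2:ℂ)^n - 1)⁻¹ • (((2:ℂ)^n) • (1 : M × M) - ((1:M), ((2:ℂ)^n) • (1:M)))
        = ((1:M), (0:M)) := by
      have h1 : ((2:ℂ)^n) • (1 : M × M) = ((((2:ℂ)^n) • (1:M), ((2:ℂ)^n) • (1:M)) : M × M) := rfl
      rw [h1, Prod.mk_sub_mk, sub_self, Prod.smul_mk, smul_zero]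
      congr 1
      rw [show ((2:ℂ)^n) • (1:M) - 1 = ((2:ℂ)^n - 1) • (1:M) by rw [sub_smul, one_smul],
        smul_smul, inv_mul_cancel₀ h2n, one_smul]
    rwa [heq] at hmem
  have h01 : (((0:M), (1:M)) : M × M) ∈ A := by
    have hmem := A.sub_mem A.one_mem h10
    have heq : (1 : M × M) - (((1:M),(0:M)) : M × M) = ((0:M),(1:M)) := by
      rw [show (1 : M × M) = (((1:M),(1:M)) : M × M) from rfl, Prod.mk_sub_mk, sub_self, sub_zero]
    rwa [heq] at hmem
  have hx0 : ((x n, (0:M)) : M × M) ∈ A := by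
    have hmem := A.mul_mem hu h10
    have heq : u * (((1:M),(0:M)) : M × M) = (x n, (0:M)) := by
      rw [hu_def, Prod.mk_mul_mk, mul_one, mul_zero]
    rwa [heq] at hmem
  have hxT0 : (((x n)ᵀ, (0:M)) : M × M) ∈ A := by
    have hmem := A.smul_mem (A.mul_mem hv h10) (2:ℂ)⁻¹
    have heq : (2:ℂ)⁻¹ • (v * (((1:M),(0:M)) : M × M)) = ((x n)ᵀ, (0:M)) := by
      rw [hv_def, Prod.mk_mul_mk, mul_one, mul_zero, Prod.smul_mk, smul_zero, smul_smul,
        inv_mul_cancel₀ (two_ne_zero), one_smul]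
    rwa [heq] at hmem
  have h0x : (((0:M), x n) : M × M) ∈ A := by
    have hmem := A.smul_mem (A.mul_mem hu h01) (2:ℂ)⁻¹
    have heq : (2:ℂ)⁻¹ • (u * (((0:M),(1:M)) : M × M)) = ((0:M), x n) := by
      rw [hu_def, Prod.mk_mul_mk, mul_one, mul_zero, Prod.smul_mk, smul_zero, smul_smul,
        inv_mul_cancel₀ (two_ne_zero), one_smul]
    rwa [heq] at hmem
  have h0xT : (((0:M), (x n)ᵀ) : M × M) ∈ A := by
    have hmem := A.mul_mem hv h01
    have heq : v * (((0:M),(1:M)) : M × M) = ((0:M), (x n)ᵀ) := by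
      rw [hv_def, Prod.mk_mul_mk, mul_one, mul_zero]
    rwa [heq] at hmem
  have hleft : ∀ m : M, ((m, (0:M)) : M × M) ∈ A := by
    intro m
    have hm : m ∈ Algebra.adjoin ℂ ({x n, (x n)ᵀ} : Set M) := by
      rw [adjoin_x_xT n]; exact Algebra.mem_top
    induction hm using Algebra.adjoin_induction with
    | mem t ht =>
      rcases Set.mem_insert_iff.mp ht with rfl | ht
      · exact hx0
      · rw [Set.mem_singleton_iff.mp ht]; exact hxT0
    | algebraMap c =>
      have hmem := A.smul_mem h10 c
      rw [Prod.smul_mk, smul_zero] at hmem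
      rwa [Algebra.algebraMap_eq_smul_one]
    | add p q hp hq ihp ihq =>
      have hmem := A.add_mem ihp ihq
      rwa [Prod.mk_add_mk, add_zero] at hmem
    | mul p q hp hq ihp ihq =>
      have hmem := A.mul_mem ihp ihq
      rwa [Prod.mk_mul_mk, mul_zero] at hmem
  have hright : ∀ m : M, (((0:M), m) : M × M) ∈ A := by
    intro m
    have hm : m ∈ Algebra.adjoin ℂ ({x n, (x n)ᵀ} : Set M) := by
      rw [adjoin_x_xT n]; exact Algebra.mem_top
    induction hm using Algebra.adjoin_induction with
    | mem t ht =>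
      rcases Set.mem_insert_iff.mp ht with rfl | ht
      · exact h0x
      · rw [Set.mem_singleton_iff.mp ht]; exact h0xT
    | algebraMap c =>
      have hmem := A.smul_mem h01 c
      rw [Prod.smul_mk, smul_zero] at hmem
      rwa [Algebra.algebraMap_eq_smul_one]
    | add p q hp hq ihp ihq =>
      have hmem := A.add_mem ihp ihq
      rwa [Prod.mk_add_mk, add_zero] at hmem
    | mul p q hp hq ihp ihq =>
      have hmem := A.mul_mem ihp ihq
      rwa [Prod.mk_mul_mk, mul_zero] at hmem
  rw [eq_top_iff]
  rintro ⟨m₁, m₂⟩ -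
  have hsplit : ((m₁, m₂) : M × M) = ((m₁, (0:M)) : M × M) + (((0:M), m₂) : M × M) := by
    rw [Prod.mk_add_mk, add_zero, zero_add]
  rw [hsplit]
  exact A.add_mem (hleft m₁) (hright m₂)
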